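/- Let K be a subgroup of G and g ∈ G an element with g·K·g⁻¹ = K. Suppose V is semisimple as a K-module (V is a sum of simple K-submodules), let (d, W) be a simple representation of K whose isotypic component V_d in V is nonzero and finite-dimensional, and let E : V → V be the 𝕜-linear projection onto V_d along the sum of all the other isotypic components of V (this projection exists since V is a semisimple K-module and is the direct sum of its isotypic components). Define Θ_d(g) to be the trace of the endomorphism of V_d given by u ↦ E(π(g) u). If Θ_d(g) ≠ 0, then π(g)(V_d) = V_d and the g-twist ᵍd is K-isomorphic to d. (This is the first assertion of the paper's Proposition on partial traces: if Θ_d(g) ≠ 0 then g intertwines d with itself.) -/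

import Mathlib

variable {𝕜 : Type*} [Field 𝕜] {G : Type*} [Group G]
  {V : Type*} [AddCommGroup V] [Module 𝕜 V]

/-- `W` is a `K`-submodule of `V` (for the representation `π` of `G` on `V`). -/
def IsSubrep (π : G →* (V ≃ₗ[𝕜] V)) (K : Subgroup G) (W : Submodule 𝕜 V) : Prop :=
  ∀ c ∈ K, ∀ x ∈ W, π c x ∈ W

/-- Two submodules of `V` are `K`-isomorphic: there is a `𝕜`-linear isomorphism between
them intertwining the `K`-actions. -/
def SubrepIso (π : G →* (V ≃ₗ[𝕜] V)) (K : Subgroup G) (W₁ W₂ : Submodule 𝕜 V) : Prop :=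
  ∃ e : W₁ ≃ₗ[𝕜] W₂, ∀ c ∈ K, ∀ (x : W₁) (hx : π c (x : V) ∈ W₁),
    (e ⟨π c (x : V), hx⟩ : V) = π c ((e x : V))

/-- A submodule `W'` of `V` is `K`-isomorphic to the abstract representation `(d, Wd)`
of `K`. -/
def IsoToRep (π : G →* (V ≃ₗ[𝕜] V)) (K : Subgroup G) (W' : Submodule 𝕜 V)
    {Wd : Type*} [AddCommGroup Wd] [Module 𝕜 Wd] (d : K →* (Wd ≃ₗ[𝕜] Wd)) : Prop :=
  ∃ e : W' ≃ₗ[𝕜] Wd, ∀ (c : K) (x : W') (hx : π (c : G) (x : V) ∈ W'),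
    e ⟨π (c : G) (x : V), hx⟩ = d c (e x)

/-- The `d`-isotypic component of `V`: the sum of all `K`-submodules of `V` that are
`K`-isomorphic to the representation `(d, Wd)`. -/
def IsotypicComponent (π : G →* (V ≃ₗ[𝕜] V)) (K : Subgroup G)
    {Wd : Type*} [AddCommGroup Wd] [Module 𝕜 Wd] (d : K →* (Wd ≃ₗ[𝕜] Wd)) :
    Submodule 𝕜 V :=
  sSup {W' : Submodule 𝕜 V | IsSubrep π K W' ∧ IsoToRep π K W' d}

/-- The abstract representation `(d, Wd)` of `K` is simple. -/
def IsSimpleRep {G : Type*} [Group G] {K : Subgroup G}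
    {Wd : Type*} [AddCommGroup Wd] [Module 𝕜 Wd] (d : K →* (Wd ≃ₗ[𝕜] Wd)) : Prop :=
  (⊤ : Submodule 𝕜 Wd) ≠ ⊥ ∧
    ∀ U : Submodule 𝕜 Wd, (∀ (c : K), ∀ x ∈ U, d c x ∈ U) → U = ⊥ ∨ U = ⊤

/-- Conjugation `c ↦ g⁻¹ c g` as a map `K → K`, for `g` normalizing `K`. -/
def conjElem {G : Type*} [Group G] (K : Subgroup G) (g : G)
    (hg : ∀ x : G, g * x * g⁻¹ ∈ K ↔ x ∈ K) (c : K) : K :=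
  ⟨g⁻¹ * (c : G) * g, (hg _).mp (by
    have h : g * (g⁻¹ * (c : G) * g) * g⁻¹ = (c : G) := by group
    rw [h]; exact c.2)⟩

/-- The `g`-twist `ᵍd` of a representation `d` of `K`, given by `ᵍd(c) = d(g⁻¹ c g)`. -/
def twistRep {G : Type*} [Group G] {K : Subgroup G} (g : G)
    (hg : ∀ x : G, g * x * g⁻¹ ∈ K ↔ x ∈ K)
    {Wd : Type*} [AddCommGroup Wd] [Module 𝕜 Wd] (d : K →* (Wd ≃ₗ[𝕜] Wd)) :
    K →* (Wd ≃ₗ[𝕜] Wd) where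
  toFun c := d (conjElem K g hg c)
  map_one' := by
    have h : conjElem K g hg 1 = 1 := by
      apply Subtype.ext; simp [conjElem]
    show d (conjElem K g hg 1) = 1
    rw [h, map_one]
  map_mul' c₁ c₂ := by
    have h : conjElem K g hg (c₁ * c₂) = conjElem K g hg c₁ * conjElem K g hg c₂ := by
      apply Subtype.ext; simp only [conjElem, Subgroup.coe_mul, MulMemClass.mk_mul_mk]
      group
    show d (conjElem K g hg (c₁ * c₂)) = d (conjElem K g hg c₁) * d (conjElem K g hg c₂)
    rw [h, map_mul]

/-- `RepEquiv d₁ d₂`: the two representations of `K` on `Wd` are isomorphic. -/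
def RepEquiv {G : Type*} [Group G] {K : Subgroup G}
    {Wd : Type*} [AddCommGroup Wd] [Module 𝕜 Wd]
    (d₁ d₂ : K →* (Wd ≃ₗ[𝕜] Wd)) : Prop :=
  ∃ e : Wd ≃ₗ[𝕜] Wd, ∀ (c : K) (x : Wd), e (d₁ c x) = d₂ c (e x)

/-- `W` is a simple (irreducible) `K`-submodule of `V`. -/
def IsSimpleSubrep (π : G →* (V ≃ₗ[𝕜] V)) (K : Subgroup G) (W : Submodule 𝕜 V) : Prop :=
  IsSubrep π K W ∧ W ≠ ⊥ ∧
    ∀ U : Submodule 𝕜 V, U ≤ W → IsSubrep π K U → U = ⊥ ∨ U = W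


section Aux

variable {π : G →* (V ≃ₗ[𝕜] V)} {K : Subgroup G}
variable {Wd : Type*} [AddCommGroup Wd] [Module 𝕜 Wd]

lemma pi_mul_apply (π : G →* (V ≃ₗ[𝕜] V)) (a b : G) (v : V) :
    π a (π b v) = π (a * b) v := by
  rw [map_mul]; rfl

lemma isoToRep_of_repEquiv {W : Submodule 𝕜 V} {d₁ d₂ : K →* (Wd ≃ₗ[𝕜] Wd)}
    (h₁ : IsoToRep π K W d₁) (h₂ : RepEquiv d₁ d₂) : IsoToRep π K W d₂ := by
  obtain ⟨e, he⟩ := h₁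
  obtain ⟨f, hf⟩ := h₂
  refine ⟨e.trans f, fun c x hx => ?_⟩
  simp only [LinearEquiv.trans_apply, he c x hx, hf]

lemma repEquiv_of_isoToRep {W : Submodule 𝕜 V} {d₁ d₂ : K →* (Wd ≃ₗ[𝕜] Wd)}
    (hW : IsSubrep π K W) (h₁ : IsoToRep π K W d₁) (h₂ : IsoToRep π K W d₂) :
    RepEquiv d₁ d₂ := by
  obtain ⟨e₁, he₁⟩ := h₁
  obtain ⟨e₂, he₂⟩ := h₂
  refine ⟨e₁.symm.trans e₂, fun c x => ?_⟩
  set w := e₁.symm x with hw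
  have hx : π (c : G) (w : V) ∈ W := hW c c.2 w w.2
  have h1 : e₁ ⟨π (c : G) (w : V), hx⟩ = d₁ c x := by
    rw [he₁ c w hx, hw, e₁.apply_symm_apply]
  have h2 := he₂ c w hx
  simp only [LinearEquiv.trans_apply, ← h1, e₁.symm_apply_apply, h2]
  rfl

lemma isSimpleSubrep_of_isoToRep {W : Submodule 𝕜 V} {d : K →* (Wd ≃ₗ[𝕜] Wd)}
    (hd : IsSimpleRep d) (hW : IsSubrep π K W) (h : IsoToRep π K W d) :
    IsSimpleSubrep π K W := by
  obtain ⟨e, he⟩ := h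
  refine ⟨hW, ?_, ?_⟩
  · rintro rfl
    refine hd.1 ?_
    have hz : ∀ y : Wd, y = 0 := fun y => by
      have h0 : e.symm y = 0 := Subsingleton.elim _ _
      calc y = e (e.symm y) := (e.apply_symm_apply y).symm
      _ = 0 := by rw [h0, map_zero]
    ext y
    simp [hz y]
  · intro U hUW hU
    set U' : Submodule 𝕜 Wd := (U.comap W.subtype).map (e : W →ₗ[𝕜] Wd) with hU'def
    have hU' : ∀ (c : K), ∀ y ∈ U', d c y ∈ U' := by
      rintro c y ⟨x, hxU, rfl⟩
      have hx : π (c : G) (x : V) ∈ W := hW c c.2 x x.2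
      have hm : π (c : G) (x : V) ∈ U := hU c c.2 x hxU
      refine ⟨⟨π (c : G) (x : V), hx⟩, hm, ?_⟩
      simpa using he c x hx
    rcases hd.2 U' hU' with h' | h'
    · left
      rw [Submodule.eq_bot_iff]
      intro u huU
      have hmem : e ⟨u, hUW huU⟩ ∈ U' := ⟨⟨u, hUW huU⟩, huU, rfl⟩
      rw [h', Submodule.mem_bot] at hmem
      have h0 : (⟨u, hUW huU⟩ : W) = 0 := e.injective (by simpa using hmem)
      simpa using congrArg Subtype.val h0
    · right
      refine le_antisymm hUW fun w hwW => ?_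
      have hmem : e ⟨w, hwW⟩ ∈ U' := h' ▸ Submodule.mem_top
      obtain ⟨x, hxU, hx⟩ := hmem
      have hxeq : x = ⟨w, hwW⟩ := e.injective (by simpa using hx)
      rw [hxeq] at hxU
      exact hxU

lemma isSimpleRep_twist {g : G} (hg : ∀ x : G, g * x * g⁻¹ ∈ K ↔ x ∈ K)
    {d : K →* (Wd ≃ₗ[𝕜] Wd)} (hd : IsSimpleRep d) : IsSimpleRep (twistRep g hg d) := by
  refine ⟨hd.1, fun U hU => ?_⟩
  refine hd.2 U fun c x hx => ?_
  have hc : g * (c : G) * g⁻¹ ∈ K := (hg _).mpr c.2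
  have hstep := hU ⟨g * (c : G) * g⁻¹, hc⟩ x hx
  have heq : twistRep g hg d ⟨g * (c : G) * g⁻¹, hc⟩ = d c := by
    show d (conjElem K g hg _) = d c
    congr 1
    apply Subtype.ext
    show g⁻¹ * (g * (c : G) * g⁻¹) * g = (c : G)
    group
  rwa [heq] at hstep

lemma isSubrep_map {g : G} (hg : ∀ x : G, g * x * g⁻¹ ∈ K ↔ x ∈ K)
    {W : Submodule 𝕜 V} (hW : IsSubrep π K W) :
    IsSubrep π K (W.map ((π g : V ≃ₗ[𝕜] V) : V →ₗ[𝕜] V)) := by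
  rintro c hc x ⟨w, hwW, rfl⟩
  have hc' : g⁻¹ * c * g ∈ K := (hg _).mp (by
    rw [show g * (g⁻¹ * c * g) * g⁻¹ = c by group]; exact hc)
  refine ⟨π (g⁻¹ * c * g) w, hW _ hc' w hwW, ?_⟩
  show π g (π (g⁻¹ * c * g) w) = π c (π g w)
  rw [pi_mul_apply, pi_mul_apply, show g * (g⁻¹ * c * g) = c * g by group]

lemma isoToRep_map {g : G} (hg : ∀ x : G, g * x * g⁻¹ ∈ K ↔ x ∈ K)
    {W : Submodule 𝕜 V} {d : K →* (Wd ≃ₗ[𝕜] Wd)}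
    (hW : IsSubrep π K W) (h : IsoToRep π K W d) :
    IsoToRep π K (W.map ((π g : V ≃ₗ[𝕜] V) : V →ₗ[𝕜] V)) (twistRep g hg d) := by
  obtain ⟨e, he⟩ := h
  refine ⟨((π g).submoduleMap W).symm.trans e, fun c x hx => ?_⟩
  set y := ((π g).submoduleMap W).symm x with hy
  have hxy : (x : V) = π g (y : V) := by
    have h1 := congrArg Subtype.val (((π g).submoduleMap W).apply_symm_apply x)
    exact h1.symm
  have hc' : g⁻¹ * (c : G) * g ∈ K := (hg _).mp (by
    rw [show g * (g⁻¹ * (c : G) * g) * g⁻¹ = (c : G) by group]; exact c.2)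
  have hyW : π (g⁻¹ * (c : G) * g) (y : V) ∈ W := hW _ hc' y y.2
  have hval : π (c : G) (x : V) = π g (π (g⁻¹ * (c : G) * g) (y : V)) := by
    rw [hxy, pi_mul_apply, pi_mul_apply,
      show (c : G) * g = g * (g⁻¹ * (c : G) * g) by group]
  have hsymm : ((π g).submoduleMap W).symm ⟨π (c : G) (x : V), hx⟩ =
      ⟨π (g⁻¹ * (c : G) * g) (y : V), hyW⟩ := by
    rw [LinearEquiv.symm_apply_eq]
    apply Subtype.ext
    exact hval
  simp only [LinearEquiv.trans_apply, hsymm]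
  have hhe := he (⟨g⁻¹ * (c : G) * g, hc'⟩ : K) y hyW
  rw [hhe]
  rfl

end Aux

/-- Suppose `g` normalizes `K`, `V` is semisimple as a `K`-module,
`(d, Wd)` is a simple representation of `K` whose isotypic component `V_d` is nonzero
and finite-dimensional, and `E` is the projection onto `V_d` along the sum of all the
other isotypic components (equivalently, along the sum of all simple `K`-submodules not
isomorphic to `(d, Wd)`).  Let `Θ_d(g)` be the trace on `V_d` of `u ↦ E (π g u)`.
If `Θ_d(g) ≠ 0`, then `π g (V_d) = V_d` and the `g`-twist `ᵍd` is `K`-isomorphic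
to `d`. -/
theorem partial_trace_nonzero_implies_intertwining
    (π : G →* (V ≃ₗ[𝕜] V)) (K : Subgroup G) (g : G)
    (hg : ∀ x : G, g * x * g⁻¹ ∈ K ↔ x ∈ K)
    (hsemisimple : sSup {W : Submodule 𝕜 V | IsSimpleSubrep π K W} = ⊤)
    {Wd : Type*} [AddCommGroup Wd] [Module 𝕜 Wd]
    (d : K →* (Wd ≃ₗ[𝕜] Wd)) (hd : IsSimpleRep d)
    (hne : IsotypicComponent π K d ≠ ⊥)
    (hfin : FiniteDimensional 𝕜 (IsotypicComponent π K d))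
    (E : V →ₗ[𝕜] V)
    (hproj : ∀ x ∈ IsotypicComponent π K d, E x = x)
    (hker : ∀ x ∈ sSup {W : Submodule 𝕜 V | IsSimpleSubrep π K W ∧ ¬ IsoToRep π K W d},
      E x = 0)
    (hrange : ∀ x : V, E x ∈ IsotypicComponent π K d)
    (hΘ : LinearMap.trace 𝕜 (IsotypicComponent π K d)
      (LinearMap.codRestrict (IsotypicComponent π K d)
        (E ∘ₗ (π g).toLinearMap ∘ₗ (IsotypicComponent π K d).subtype)
        (fun _ => hrange _)) ≠ 0) :
    (IsotypicComponent π K d).map (π g).toLinearMap = IsotypicComponent π K d ∧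
      RepEquiv (twistRep g hg d) d := by
  classical
  set Vd := IsotypicComponent π K d with hVdDef
  set tw := twistRep g hg d with htwDef
  have hrep : RepEquiv tw d := by
    by_contra hcontra
    have hle : Vd.map ((π g : V ≃ₗ[𝕜] V) : V →ₗ[𝕜] V) ≤
        sSup {W : Submodule 𝕜 V | IsSimpleSubrep π K W ∧ ¬ IsoToRep π K W d} := by
      rw [Submodule.map_le_iff_le_comap]
      refine sSup_le fun W hW => ?_
      rw [← Submodule.map_le_iff_le_comap]
      refine le_sSup ?_
      obtain ⟨hW1, hW2⟩ := hW
      have hsub := isSubrep_map (π := π) hg hW1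
      have hiso := isoToRep_map (π := π) hg hW1 hW2
      exact ⟨isSimpleSubrep_of_isoToRep (isSimpleRep_twist hg hd) hsub hiso,
        fun h => hcontra (repEquiv_of_isoToRep hsub hiso h)⟩
    refine hΘ ?_
    have hzero : ∀ u : Vd, E ((π g) (u : V)) = 0 :=
      fun u => hker _ (hle ⟨(u : V), u.2, rfl⟩)
    have hT : LinearMap.codRestrict Vd (E ∘ₗ (π g).toLinearMap ∘ₗ Vd.subtype)
        (fun _ => hrange _) = 0 :=
      LinearMap.ext fun u => Subtype.ext (by simpa using hzero u)
    rw [hT, map_zero]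
  have hmaple : Vd.map ((π g : V ≃ₗ[𝕜] V) : V →ₗ[𝕜] V) ≤ Vd := by
    rw [Submodule.map_le_iff_le_comap]
    refine sSup_le fun W hW => ?_
    rw [← Submodule.map_le_iff_le_comap]
    exact le_sSup ⟨isSubrep_map (π := π) hg hW.1,
      isoToRep_of_repEquiv (isoToRep_map (π := π) hg hW.1 hW.2) hrep⟩
  refine ⟨?_, hrep⟩
  apply Submodule.eq_of_le_of_finrank_le hmaple
  rw [LinearEquiv.finrank_map_eq]
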